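/- For every integer n ≥ 1, the number of sequences s ∈ {−1, +1}^(2n²) for which some partial sum s_1 + s_2 + ⋯ + s_t (for some 1 ≤ t ≤ 2n²) equals n is at least 2^(2n²)/4. Equivalently, a simple random walk on ℤ started at 0 reaches the point n within 2n² steps with probability at least 1/4. -/

import Mathlib

open Finset

namespace Stmt12


/-- increment of a step -/
def inc (b : Bool) : ℤ := if b then 1 else -1

/-- position of the walk after `k` steps -/
def W {L : ℕ} (s : Fin L → Bool) (k : ℕ) : ℤ :=
  ∑ i ∈ Finset.univ.filter (fun i : Fin L => (i : ℕ) < k), inc (s i)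

lemma W_zero {L : ℕ} (s : Fin L → Bool) : W s 0 = 0 := by
  simp [W]

lemma W_succ_of_lt {L : ℕ} (s : Fin L → Bool) {k : ℕ} (hk : k < L) :
    W s (k + 1) = W s k + inc (s ⟨k, hk⟩) := by
  unfold W
  rw [show (Finset.univ.filter (fun i : Fin L => (i : ℕ) < k + 1))
      = insert ⟨k, hk⟩ (Finset.univ.filter (fun i : Fin L => (i : ℕ) < k)) by
    ext i
    simp only [mem_insert, mem_filter, mem_univ, true_and, Fin.ext_iff]
    omega]
  rw [Finset.sum_insert (by simp)]
  ring

lemma W_succ_of_ge {L : ℕ} (s : Fin L → Bool) {k : ℕ} (hk : L ≤ k) :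
    W s (k + 1) = W s k := by
  unfold W
  congr 1
  ext i
  simp only [mem_filter, mem_univ, true_and]
  have := i.isLt
  omega

lemma inc_abs (b : Bool) : inc b = 1 ∨ inc b = -1 := by
  cases b <;> simp [inc]

lemma inc_not (b : Bool) : inc (!b) = - inc b := by
  cases b <;> simp [inc]

/-- discrete IVT: if the walk is `≥ n` at time `k`, it has visited `n` at some time `1 ≤ j ≤ k`. -/
lemma exists_hit {L n : ℕ} (hn : 1 ≤ n) (s : Fin L → Bool) :
    ∀ k : ℕ, (n : ℤ) ≤ W s k → ∃ j, 1 ≤ j ∧ j ≤ k ∧ W s j = n := by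
  intro k
  induction k with
  | zero => intro h; rw [W_zero] at h; exfalso; omega
  | succ k ih =>
    intro h
    by_cases hk : (n : ℤ) ≤ W s k
    · obtain ⟨j, h1, h2, h3⟩ := ih hk
      exact ⟨j, h1, Nat.le_succ_of_le h2, h3⟩
    · refine ⟨k + 1, by omega, le_refl _, ?_⟩
      by_cases hkL : k < L
      · have := W_succ_of_lt s hkL
        rcases inc_abs (s ⟨k, hkL⟩) with h' | h' <;> omega
      · have := W_succ_of_ge s (by omega : L ≤ k)
        omega








open Classical in
/-- reflection of the walk after its first visit to `n` (identity if it never visits). -/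
noncomputable def rf {L : ℕ} (n : ℕ) (s : Fin L → Bool) : Fin L → Bool :=
  if h : ∃ k, W s k = (n : ℤ) then
    (fun i => if Nat.find h ≤ (i : ℕ) then !(s i) else s i)
  else s

section
variable {L n : ℕ} {s : Fin L → Bool} (h : ∃ k, W s k = (n : ℤ))
include h

lemma rf_eq : rf n s = fun i : Fin L => if Nat.find h ≤ (i : ℕ) then !(s i) else s i := by
  simp [rf, h]

lemma W_rf_of_le {k : ℕ} (hk : k ≤ Nat.find h) : W (rf n s) k = W s k := by
  rw [rf_eq h]
  unfold W
  refine Finset.sum_congr rfl fun i hi => ?_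
  simp only [mem_filter, mem_univ, true_and] at hi
  simp only []
  rw [if_neg (by intro hc; have hc' : Nat.find h ≤ (i : ℕ) := by convert hc using 1; exact Nat.find_congr' Iff.rfl
                 omega)]

lemma W_rf_of_ge {k : ℕ} (hk : Nat.find h ≤ k) :
    W (rf n s) k = 2 * n - W s k := by
  induction k, hk using Nat.le_induction with
  | base =>
    rw [W_rf_of_le h le_rfl, Nat.find_spec h]
    ring
  | succ k hk ih =>
    by_cases hkL : k < L
    · rw [W_succ_of_lt _ hkL, W_succ_of_lt _ hkL, ih]
      rw [rf_eq h]
      simp only [if_pos hk, inc_not]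
      ring
    · rw [W_succ_of_ge _ (by omega), W_succ_of_ge _ (by omega), ih]

lemma rf_exists : ∃ k, W (rf n s) k = (n : ℤ) :=
  ⟨Nat.find h, by rw [W_rf_of_le h le_rfl]; exact Nat.find_spec h⟩

lemma rf_find : Nat.find (rf_exists h) = Nat.find h := by
  refine le_antisymm (Nat.find_le ?_) ?_
  · rw [W_rf_of_le h le_rfl]; exact Nat.find_spec h
  · by_contra hlt
    push_neg at hlt
    have h1 := Nat.find_spec (rf_exists h)
    rw [W_rf_of_le h (le_of_lt hlt)] at h1
    exact Nat.find_min h hlt h1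

lemma rf_rf : rf n (rf n s) = s := by
  rw [rf_eq (rf_exists h), rf_find h, rf_eq h]
  funext i
  by_cases hi : Nat.find h ≤ (i : ℕ) <;> simp [hi]

end

/-- number of `true`s -/
def jj {L : ℕ} (s : Fin L → Bool) : ℕ := (Finset.univ.filter (fun i => s i = true)).card

lemma jj_le {L : ℕ} (s : Fin L → Bool) : jj s ≤ L := by
  exact le_trans (Finset.card_filter_le _ _) (by simp)


lemma W_total {L : ℕ} (s : Fin L → Bool) : W s L = 2 * (jj s : ℤ) - L := by
  unfold W
  rw [show (Finset.univ.filter fun i : Fin L => (i:ℕ) < L) = Finset.univ by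
    ext i; simp [i.isLt]]
  have h : ∀ b, inc b = 2 * (if b then (1:ℤ) else 0) - 1 := by
    intro b; cases b <;> simp [inc]
  rw [Finset.sum_congr rfl (fun i _ => h (s i))]
  rw [Finset.sum_sub_distrib, ← Finset.mul_sum, Finset.sum_boole, Finset.sum_const]
  simp [jj]



open Classical in
lemma E_card (L k : ℕ) :
    (Finset.univ.filter (fun s : Fin L → Bool => jj s = k)).card = L.choose k := by
  have : (Finset.univ.filter (fun s : Fin L → Bool => jj s = k)).card
      = ((Finset.univ : Finset (Fin L)).powersetCard k).card := by
    refine Finset.card_bij' (fun s _ => Finset.univ.filter (fun i => s i = true))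
      (fun t _ => fun x => decide (x ∈ t)) ?_ ?_ ?_ ?_
    · intro s hs
      simp only [mem_filter, mem_univ, true_and] at hs
      simp only [Finset.mem_powersetCard]
      exact ⟨Finset.subset_univ _, hs⟩
    · intro t ht
      simp only [Finset.mem_powersetCard] at ht
      rw [Finset.mem_filter]; simp only [mem_univ, true_and, jj]
      rw [← ht.2]
      congr 1
      ext i
      simp
    · intro s _
      funext i
      simp
    · intro t _
      ext i
      simp
  rw [this, Finset.card_powersetCard, Finset.card_univ, Fintype.card_fin]

open Classical in
lemma flip_card (L a b : ℕ) (hab : a + b = L) :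
    (Finset.univ.filter (fun s : Fin L → Bool => jj s ≤ a)).card
      = (Finset.univ.filter (fun s : Fin L → Bool => b ≤ jj s)).card := by
  have hj : ∀ s : Fin L → Bool, jj (fun i => !(s i)) = L - jj s := by
    intro s
    have : (Finset.univ.filter (fun i => (!(s i)) = true))
        = Finset.univ \ (Finset.univ.filter (fun i => s i = true)) := by
      ext i; simp
    rw [jj, this, Finset.card_sdiff_of_subset (Finset.filter_subset _ _)]
    simp [jj]
  have hle : ∀ s : Fin L → Bool, jj s ≤ L := by
    intro s
    exact le_trans (Finset.card_filter_le _ _) (by simp)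
  refine Finset.card_bij' (fun s _ => fun i => !(s i)) (fun s _ => fun i => !(s i))
    ?_ ?_ ?_ ?_
  · intro s hs
    simp only [mem_filter, mem_univ, true_and] at hs ⊢
    rw [hj]
    have := hle s
    omega
  · intro s hs
    simp only [mem_filter, mem_univ, true_and] at hs ⊢
    rw [hj]
    have := hle s
    omega
  · intro s _; funext i; simp
  · intro s _; funext i; simp

open Classical in
lemma key (m K : ℕ) (hK1 : m < K) (hK2 : K ≤ 2 * m) :
    2 ^ (2 * m) ≤
      2 * (Finset.univ.filter (fun s : Fin (2 * m) → Bool => K ≤ jj s)).card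
        + (2 * K - 2 * m - 1) * Nat.centralBinom m := by
  set D := (Finset.univ.filter (fun s : Fin (2 * m) → Bool => K ≤ jj s)) with hD
  set F := (Finset.univ.filter
      (fun s : Fin (2 * m) → Bool => 2 * m - K + 1 ≤ jj s ∧ jj s ≤ K - 1)) with hF
  have htot : D.card + (Finset.univ.filter
      (fun s : Fin (2 * m) → Bool => jj s ≤ K - 1)).card = 2 ^ (2 * m) := by
    have h := Finset.card_filter_add_card_filter_not (s := (Finset.univ : Finset (Fin (2*m) → Bool)))
      (p := fun s => K ≤ jj s)
    rw [Finset.card_univ] at h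
    have hc : Fintype.card (Fin (2*m) → Bool) = 2 ^ (2*m) := by
      simp [Fintype.card_fun]
    rw [hc] at h
    rw [← h]
    congr 2
    apply Finset.filter_congr
    intro s _
    constructor
    · intro hs; omega
    · intro hs; omega
  have hflip : (Finset.univ.filter
      (fun s : Fin (2 * m) → Bool => jj s ≤ K - 1)).card
      = (Finset.univ.filter (fun s : Fin (2 * m) → Bool => 2*m - K + 1 ≤ jj s)).card := by
    apply flip_card
    omega
  have hsub : (Finset.univ.filter (fun s : Fin (2 * m) → Bool => 2*m - K + 1 ≤ jj s))
      ⊆ D ∪ F := by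
    intro s hs
    simp only [mem_filter, mem_univ, true_and, Finset.mem_union, hD, hF] at hs ⊢
    omega
  have hFcard : F.card ≤ (2 * K - 2 * m - 1) * Nat.centralBinom m := by
    have hfib : F.card = ∑ k ∈ Finset.Icc (2*m - K + 1) (K - 1),
        (F.filter (fun s => jj s = k)).card := by
      apply Finset.card_eq_sum_card_fiberwise
      intro s hs
      rw [Finset.mem_coe, Finset.mem_filter] at hs; simp only [mem_univ, true_and] at hs
      simp only [Finset.coe_Icc, Set.mem_Icc, Finset.mem_coe, Finset.mem_Icc]; exact hs
    rw [hfib]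
    calc ∑ k ∈ Finset.Icc (2*m - K + 1) (K - 1), (F.filter (fun s => jj s = k)).card
        ≤ ∑ k ∈ Finset.Icc (2*m - K + 1) (K - 1), Nat.centralBinom m := by
          apply Finset.sum_le_sum
          intro k _
          calc (F.filter (fun s => jj s = k)).card
              ≤ (Finset.univ.filter (fun s : Fin (2*m) → Bool => jj s = k)).card := by
                apply Finset.card_le_card
                intro s hs
                simp only [hF, Finset.filter_filter, mem_filter, mem_univ, true_and] at hs ⊢
                exact hs.2
            _ = (2*m).choose k := E_card (2*m) k
            _ ≤ (2*m).choose (2*m / 2) := Nat.choose_le_middle k (2*m)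
            _ = Nat.centralBinom m := by rw [Nat.centralBinom]; congr 1; omega
      _ = (2 * K - 2 * m - 1) * Nat.centralBinom m := by
          rw [Finset.sum_const, Nat.card_Icc, smul_eq_mul]
          congr 1
          omega
  calc 2 ^ (2*m) = D.card + (Finset.univ.filter
      (fun s : Fin (2 * m) → Bool => jj s ≤ K - 1)).card := htot.symm
    _ = D.card + (Finset.univ.filter (fun s : Fin (2 * m) → Bool => 2*m - K + 1 ≤ jj s)).card := by rw [hflip]
    _ ≤ D.card + (D ∪ F).card := by
        exact Nat.add_le_add_left (Finset.card_le_card hsub) _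
    _ ≤ D.card + (D.card + F.card) := Nat.add_le_add_left (Finset.card_union_le _ _) _
    _ ≤ 2 * D.card + (2 * K - 2 * m - 1) * Nat.centralBinom m := by omega

lemma cb_sq (m : ℕ) : (2 * m + 1) * (Nat.centralBinom m) ^ 2 ≤ 16 ^ m := by
  induction m with
  | zero => simp [Nat.centralBinom]
  | succ m ih =>
    have h := Nat.succ_mul_centralBinom_succ m
    have hpos : 0 < (m + 1) ^ 2 := by positivity
    have key : (m + 1)^2 * ((2 * (m+1) + 1) * (Nat.centralBinom (m+1)) ^ 2)
        ≤ (m + 1)^2 * 16 ^ (m+1) := by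
      have e1 : (m + 1)^2 * ((2 * (m+1) + 1) * (Nat.centralBinom (m+1)) ^ 2)
          = (2*m + 3) * ((m+1) * Nat.centralBinom (m+1))^2 := by ring
      rw [e1, h]
      have e2 : (2 * (2 * m + 1) * Nat.centralBinom m) ^ 2
          = 4 * (2*m+1) * ((2*m+1) * (Nat.centralBinom m)^2) := by ring
      rw [e2]
      have hcoef : (2*m+3) * (4 * (2*m+1)) ≤ (m+1)^2 * 16 := by nlinarith
      calc (2*m+3) * (4 * (2*m+1) * ((2*m+1) * (Nat.centralBinom m)^2))
          ≤ (2*m+3) * (4 * (2*m+1) * 16 ^ m) := by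
            apply Nat.mul_le_mul_left
            apply Nat.mul_le_mul_left
            exact ih
        _ = ((2*m+3) * (4 * (2*m+1))) * 16 ^ m := by ring
        _ ≤ ((m+1)^2 * 16) * 16 ^ m := Nat.mul_le_mul_right _ hcoef
        _ = (m+1)^2 * 16^(m+1) := by ring
    exact Nat.le_of_mul_le_mul_left key hpos

lemma four_n_cb (n : ℕ) : 4 * n * Nat.centralBinom (n ^ 2) ≤ 3 * 2 ^ (2 * n ^ 2) := by
  have h := cb_sq (n ^ 2)
  have h2 : (4 * n * Nat.centralBinom (n ^ 2))^2 ≤ (3 * 2 ^ (2 * n ^ 2))^2 := by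
    have e1 : (4 * n * Nat.centralBinom (n ^ 2))^2
        = 16 * n^2 * (Nat.centralBinom (n^2))^2 := by ring
    have e2 : (3 * 2 ^ (2 * n ^ 2))^2 = 9 * 16 ^ (n^2) := by
      rw [mul_pow, ← pow_mul]
      norm_num
      rw [show 2 * n^2 * 2 = 4 * n^2 by ring, pow_mul]
      norm_num
    rw [e1, e2]
    have h3 : (2 * n^2 + 1) * (16 * n^2 * (Nat.centralBinom (n^2))^2)
        ≤ (2 * n^2 + 1) * (9 * 16 ^ (n^2)) := by
      calc (2 * n^2 + 1) * (16 * n^2 * (Nat.centralBinom (n^2))^2)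
          = 16 * n^2 * ((2 * n^2 + 1) * (Nat.centralBinom (n^2))^2) := by ring
        _ ≤ 16 * n^2 * 16 ^ (n^2) := Nat.mul_le_mul_left _ h
        _ ≤ ((2 * n^2 + 1) * 9) * 16 ^ (n^2) := Nat.mul_le_mul_right _ (by nlinarith)
        _ = (2 * n^2 + 1) * (9 * 16 ^ (n^2)) := by ring
    exact Nat.le_of_mul_le_mul_left h3 (by positivity)
  exact (Nat.pow_le_pow_iff_left (by norm_num)).mp h2

end Stmt12

open Finset Stmt12 in
theorem stmt12 (n : ℕ) (hn : 1 ≤ n) :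
    2 ^ (2 * n ^ 2) ≤ 4 *
      {s : Fin (2 * n ^ 2) → Bool | ∃ t : Fin (2 * n ^ 2),
        (∑ i ∈ Finset.univ.filter (fun i => i ≤ t),
          (if s i then (1 : ℤ) else -1)) = n}.ncard := by
  classical
  have hL2 : 2 ≤ 2 * n ^ 2 := by nlinarith
  -- rewrite the sum in the statement as a walk position
  have hsum : ∀ (s : Fin (2 * n ^ 2) → Bool) (t : Fin (2 * n ^ 2)),
      (∑ i ∈ Finset.univ.filter (fun i => i ≤ t), (if s i then (1 : ℤ) else -1))
        = W s ((t : ℕ) + 1) := by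
    intro s t
    apply Finset.sum_congr
    · ext i
      simp only [mem_filter, mem_univ, true_and]
      rw [Fin.le_def]
      omega
    · intros; rfl
  set A : Finset (Fin (2 * n ^ 2) → Bool) := Finset.univ.filter
    (fun s => ∃ t : Fin (2 * n ^ 2),
      (∑ i ∈ Finset.univ.filter (fun i => i ≤ t),
        (if s i then (1 : ℤ) else -1)) = n) with hA
  have hncard : {s : Fin (2 * n ^ 2) → Bool | ∃ t : Fin (2 * n ^ 2),
        (∑ i ∈ Finset.univ.filter (fun i => i ≤ t),
          (if s i then (1 : ℤ) else -1)) = n}.ncard = A.card := by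
    rw [← Set.ncard_coe_finset]
    congr 1
    ext s
    simp [hA]
  rw [hncard]
  clear hncard
  set B₁ : Finset (Fin (2 * n ^ 2) → Bool) := Finset.univ.filter
    (fun s => (n : ℤ) ≤ W s (2 * n ^ 2)) with hB₁
  set B₂ : Finset (Fin (2 * n ^ 2) → Bool) := Finset.univ.filter
    (fun s => (n : ℤ) + 1 ≤ W s (2 * n ^ 2)) with hB₂
  -- B₁ ⊆ A
  have hB₁A : B₁ ⊆ A := by
    intro s hs
    simp only [hB₁, mem_filter, mem_univ, true_and] at hs
    obtain ⟨j, hj1, hjL, hj⟩ := exists_hit hn s (2 * n ^ 2) hs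
    simp only [hA, mem_filter, mem_univ, true_and]
    refine ⟨⟨j - 1, by omega⟩, ?_⟩
    rw [hsum]
    simp only [Fin.val_mk]
    rw [Nat.sub_add_cancel hj1]
    exact hj
  -- reflection maps B₂ into A \ B₁, injectively
  have hrfl : ∀ s ∈ B₂, rf n s ∈ A \ B₁ := by
    intro s hs
    simp only [hB₂, mem_filter, mem_univ, true_and] at hs
    obtain ⟨j, hj1, hjL, hj⟩ := exists_hit hn s (2 * n ^ 2) (by linarith)
    have h : ∃ k, W s k = (n : ℤ) := ⟨j, hj⟩
    have hτL : Nat.find h ≤ 2 * n ^ 2 := le_trans (Nat.find_min' h hj) hjL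
    have hτ1 : 1 ≤ Nat.find h := by
      by_contra hc
      have h0 := Nat.find_spec h
      rw [show Nat.find h = 0 by omega, W_zero] at h0
      have : (1 : ℤ) ≤ (n : ℤ) := by exact_mod_cast hn
      omega
    rw [Finset.mem_sdiff]
    constructor
    · simp only [hA, mem_filter, mem_univ, true_and]
      refine ⟨⟨Nat.find h - 1, by omega⟩, ?_⟩
      rw [hsum]
      simp only [Fin.val_mk]
      rw [Nat.sub_add_cancel hτ1, W_rf_of_le h le_rfl]
      exact Nat.find_spec h
    · simp only [hB₁, mem_filter, mem_univ, true_and, not_le]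
      rw [W_rf_of_ge h hτL]
      omega
  have hinj : Set.InjOn (rf n) (↑B₂ : Set (Fin (2 * n ^ 2) → Bool)) := by
    intro s₁ hs₁ s₂ hs₂ heq
    simp only [Finset.coe_filter, Set.mem_setOf_eq, hB₂, mem_filter] at hs₁ hs₂
    have h₁ : ∃ k, W s₁ k = (n : ℤ) := by
      obtain ⟨j, _, _, hj⟩ := exists_hit hn s₁ (2 * n ^ 2) (by linarith [hs₁.2])
      exact ⟨j, hj⟩
    have h₂ : ∃ k, W s₂ k = (n : ℤ) := by
      obtain ⟨j, _, _, hj⟩ := exists_hit hn s₂ (2 * n ^ 2) (by linarith [hs₂.2])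
      exact ⟨j, hj⟩
    rw [← rf_rf h₁, ← rf_rf h₂, heq]
  have hcard : B₁.card + B₂.card ≤ A.card := by
    have himg : B₂.image (rf n) ⊆ A \ B₁ := by
      intro x hx
      obtain ⟨s, hs, rfl⟩ := Finset.mem_image.mp hx
      exact hrfl s hs
    have h1 : B₂.card = (B₂.image (rf n)).card := (Finset.card_image_of_injOn hinj).symm
    have h2 : (B₂.image (rf n)).card ≤ (A \ B₁).card := Finset.card_le_card himg
    have h3 : (A \ B₁).card + B₁.card = A.card := Finset.card_sdiff_add_card_eq_card hB₁A
    omega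
  -- identify B₁ and B₂ with counting sets
  have hB₁' : B₁ = Finset.univ.filter
      (fun s : Fin (2 * n ^ 2) → Bool => n ^ 2 + (n + 1) / 2 ≤ jj s) := by
    ext s
    simp only [hB₁, mem_filter, mem_univ, true_and]
    rw [W_total]
    have := jj_le s
    constructor <;> (intro; omega)
  have hB₂' : B₂ = Finset.univ.filter
      (fun s : Fin (2 * n ^ 2) → Bool => n ^ 2 + (n + 2) / 2 ≤ jj s) := by
    ext s
    simp only [hB₂, mem_filter, mem_univ, true_and]
    rw [W_total]
    have := jj_le s
    constructor <;> (intro; omega)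
  have hkey1 := key (n ^ 2) (n ^ 2 + (n + 1) / 2) (by omega)
    (by have h1 : (n+1)/2 ≤ n := by omega
        have h2 : n ≤ n^2 := by nlinarith
        omega)
  have hkey2 := key (n ^ 2) (n ^ 2 + (n + 2) / 2) (by omega)
    (by have h1 : (n+2)/2 ≤ n := by omega
        have h2 : n ≤ n^2 := by nlinarith
        omega)
  rw [← hB₁'] at hkey1
  rw [← hB₂'] at hkey2
  set c := Nat.centralBinom (n ^ 2) with hc
  have hcoef : (2 * (n ^ 2 + (n + 1) / 2) - 2 * n ^ 2 - 1)
      + (2 * (n ^ 2 + (n + 2) / 2) - 2 * n ^ 2 - 1) = 2 * n := by omega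
  have hsum2 : 2 * 2 ^ (2 * n ^ 2) ≤ 2 * B₁.card + 2 * B₂.card + 2 * n * c := by
    have := add_le_add hkey1 hkey2
    calc 2 * 2 ^ (2 * n ^ 2)
        = 2 ^ (2 * n ^ 2) + 2 ^ (2 * n ^ 2) := by ring
      _ ≤ 2 * B₁.card + (2 * (n ^ 2 + (n + 1) / 2) - 2 * n ^ 2 - 1) * c
          + (2 * B₂.card + (2 * (n ^ 2 + (n + 2) / 2) - 2 * n ^ 2 - 1) * c) := this
      _ = 2 * B₁.card + 2 * B₂.card
          + ((2 * (n ^ 2 + (n + 1) / 2) - 2 * n ^ 2 - 1)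
            + (2 * (n ^ 2 + (n + 2) / 2) - 2 * n ^ 2 - 1)) * c := by ring
      _ = 2 * B₁.card + 2 * B₂.card + 2 * n * c := by rw [hcoef]
  have hcb : 4 * n * c ≤ 3 * 2 ^ (2 * n ^ 2) := four_n_cb n
  nlinarith [hcard, hsum2, hcb]
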